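/- If the trace function β satisfies Condition 1 and γ ∈ [0,1), then M is a γ-contraction in the supremum norm: ‖MQ − Q^π‖ ≤ γ‖Q − Q^π‖ for all Q ∈ ℝ^n; consequently Q^π is the unique fixed point of M and lim_{i→∞} M^i Q = Q^π for every Q ∈ ℝ^n. -/

import Mathlib

open scoped BigOperators

/-- `P` is a transition function: `P s a` is a probability distribution on next states. -/
def IsTransition {S A : Type} [Fintype S] (P : S → A → S → ℝ) : Prop :=
  (∀ s a s', 0 ≤ P s a s') ∧ ∀ s a, ∑ s', P s a s' = 1

/-- `π` is a policy: `π s` is a probability distribution on actions. -/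
def IsPolicy {S A : Type} [Fintype A] (π : S → A → ℝ) : Prop :=
  (∀ s a, 0 ≤ π s a) ∧ ∀ s, ∑ a, π s a = 1

/-- A behavior policy assigns positive probability to every action in every state. -/
def IsBehavior {S A : Type} [Fintype A] (μ : S → A → ℝ) : Prop :=
  IsPolicy μ ∧ ∀ s a, 0 < μ s a

/-- The policy matrix `P_π((s,a),(s',a')) = P(s'|s,a)·π(a'|s')`. -/
def polMat {S A : Type} (P : S → A → S → ℝ) (π : S → A → ℝ) :
    Matrix (S × A) (S × A) ℝ :=
  fun x y => P x.1 x.2 y.1 * π y.1 y.2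

/-- The importance-sampling ratio `ρ(s,a) = π(a|s) / μ(a|s)`. -/
noncomputable def isRatio {S A : Type} (π μ : S → A → ℝ) (x : S × A) : ℝ :=
  π x.1 x.2 / μ x.1 x.2

/-- Probability under behavior policy `μ` of a length-`t` trajectory
`F = ((S_0,A_0),…,(S_t,A_t))`:  `∏_{k=1}^t P(S_k|S_{k-1},A_{k-1})·μ(A_k|S_k)`. -/
def prMu {S A : Type} (P : S → A → S → ℝ) (μ : S → A → ℝ) {t : ℕ}
    (F : Fin (t + 1) → S × A) : ℝ :=
  ∏ k : Fin t,
    (P (F k.castSucc).1 (F k.castSucc).2 (F k.succ).1 * μ (F k.succ).1 (F k.succ).2)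

/-- A trace function: a nonnegative weight for every finite trajectory,
equal to `1` on length-0 trajectories. -/
def IsTrace {S A : Type} (β : (t : ℕ) → (Fin (t + 1) → S × A) → ℝ) : Prop :=
  (∀ t F, 0 ≤ β t F) ∧ ∀ F : Fin 1 → S × A, β 0 F = 1

/-- Condition 1: `β(F_t) ≤ β(F_{t-1})·ρ_t` for every `t ≥ 1` and every trajectory `F_t`,
where `F_{t-1}` is the length-`(t-1)` prefix. -/
def Cond1 {S A : Type} (π μ : S → A → ℝ)
    (β : (t : ℕ) → (Fin (t + 1) → S × A) → ℝ) : Prop :=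
  ∀ (t : ℕ) (F : Fin (t + 2) → S × A),
    β (t + 1) F ≤ β t (fun k => F k.castSucc) * isRatio π μ (F (Fin.last (t + 1)))

/-- The matrix `B_t((s,a),(s',a')) = Σ_{F_t from (s,a) ending at (s',a')} Pr_μ(F_t)·β(F_t)`. -/
noncomputable def Bmat {S A : Type} [Fintype S] [Fintype A] [DecidableEq S] [DecidableEq A]
    (P : S → A → S → ℝ) (μ : S → A → ℝ)
    (β : (t : ℕ) → (Fin (t + 1) → S × A) → ℝ) (t : ℕ) :
    Matrix (S × A) (S × A) ℝ :=
  fun x y => ∑ F : Fin (t + 1) → S × A,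
    if F 0 = x ∧ F (Fin.last t) = y then prMu P μ F * β t F else 0

/-- The Bellman operator `T_π Q = R + γ P_π Q`. -/
noncomputable def Tpi {S A : Type} [Fintype S] [Fintype A]
    (P : S → A → S → ℝ) (R : S × A → ℝ) (π : S → A → ℝ) (γ : ℝ)
    (Q : S × A → ℝ) : S × A → ℝ :=
  fun x => R x + γ * (polMat P π).mulVec Q x

/-- The Bellman optimality operator
`(T Q)(s,a) = R(s,a) + γ Σ_{s'} P(s'|s,a) max_{a'} Q(s',a')`. -/
noncomputable def Topt {S A : Type} [Fintype S] [Fintype A] [Nonempty A]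
    (P : S → A → S → ℝ) (R : S × A → ℝ) (γ : ℝ) (Q : S × A → ℝ) : S × A → ℝ :=
  fun x => R x + γ * ∑ s', P x.1 x.2 s' * ⨆ a', Q (s', a')

/-- The operator `M Q = Q + Σ_{t=0}^∞ γ^t B_t (T_π Q − Q)`. -/
noncomputable def Mop {S A : Type} [Fintype S] [Fintype A] [DecidableEq S] [DecidableEq A]
    (P : S → A → S → ℝ) (R : S × A → ℝ) (π μ : S → A → ℝ)
    (β : (t : ℕ) → (Fin (t + 1) → S × A) → ℝ) (γ : ℝ)
    (Q : S × A → ℝ) : S × A → ℝ :=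
  fun x => Q x + ∑' t : ℕ,
    γ ^ t * (Bmat P μ β t).mulVec (fun y => Tpi P R π γ Q y - Q y) x

/-- The matrix `Z = Σ_{t=1}^∞ γ^t (B_{t−1} P_π − B_t)`. -/
noncomputable def Zmat {S A : Type} [Fintype S] [Fintype A] [DecidableEq S] [DecidableEq A]
    (P : S → A → S → ℝ) (π μ : S → A → ℝ)
    (β : (t : ℕ) → (Fin (t + 1) → S × A) → ℝ) (γ : ℝ) :
    Matrix (S × A) (S × A) ℝ :=
  fun x y => ∑' t : ℕ,
    γ ^ (t + 1) * ((Bmat P μ β t * polMat P π - Bmat P μ β (t + 1)) x y)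

/-- The matrix `C = Σ_{t=0}^∞ γ^t B_t`. -/
noncomputable def Cmat {S A : Type} [Fintype S] [Fintype A] [DecidableEq S] [DecidableEq A]
    (P : S → A → S → ℝ) (μ : S → A → ℝ)
    (β : (t : ℕ) → (Fin (t + 1) → S × A) → ℝ) (γ : ℝ) :
    Matrix (S × A) (S × A) ℝ :=
  fun x y => ∑' t : ℕ, γ ^ t * Bmat P μ β t x y

/-- The operator `M Q = Q + C (T_π Q − Q)` with `C = Σ_t γ^t B_t`. -/
noncomputable def MopC {S A : Type} [Fintype S] [Fintype A] [DecidableEq S] [DecidableEq A]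
    (P : S → A → S → ℝ) (R : S × A → ℝ) (π μ : S → A → ℝ)
    (β : (t : ℕ) → (Fin (t + 1) → S × A) → ℝ) (γ : ℝ)
    (Q : S × A → ℝ) : S × A → ℝ :=
  fun x => Q x + (Cmat P μ β γ).mulVec (fun y => Tpi P R π γ Q y - Q y) x

set_option linter.unusedSectionVars false
set_option linter.unusedVariables false

section Aux
variable {S A : Type} [Fintype S] [Fintype A] [DecidableEq S] [DecidableEq A]
  {P : S → A → S → ℝ} {π μ : S → A → ℝ} {β : (t : ℕ) → (Fin (t + 1) → S × A) → ℝ}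

lemma prMu_nonneg (hP : IsTransition P) (hμ : IsBehavior μ) {t : ℕ}
    (F : Fin (t + 1) → S × A) : 0 ≤ prMu P μ F :=
  Finset.prod_nonneg fun k _ => mul_nonneg (hP.1 _ _ _) (hμ.1.1 _ _)

lemma Bmat_nonneg (hP : IsTransition P) (hμ : IsBehavior μ) (hβ : IsTrace β)
    (t : ℕ) (x y : S × A) : 0 ≤ Bmat P μ β t x y := by
  refine Finset.sum_nonneg fun F _ => ?_
  split
  · exact mul_nonneg (prMu_nonneg hP hμ F) (hβ.1 _ _)
  · exact le_refl 0

lemma Bmat_zero (hβ : IsTrace β) (x y : S × A) :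
    Bmat P μ β 0 x y = if x = y then 1 else 0 := by
  unfold Bmat
  rw [Fintype.sum_equiv (Equiv.funUnique (Fin 1) (S × A))
    (fun F => if F 0 = x ∧ F (Fin.last 0) = y then prMu P μ F * β 0 F else 0)
    (fun z => if z = x ∧ z = y then 1 else 0)
    (fun F => by
      have h0 : (Equiv.funUnique (Fin 1) (S × A)) F = F 0 := rfl
      have h1 : F (Fin.last 0) = F 0 := rfl
      simp [h0, h1, prMu, hβ.2 F])]
  by_cases h : x = y
  · subst h; simp
  · rw [if_neg h, Finset.sum_eq_zero]
    intro z _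
    by_cases hz : z = x <;> simp_all

set_option linter.unusedSectionVars false

lemma prMu_snoc (F : Fin (t + 1) → S × A) (y : S × A) :
    prMu P μ (Fin.snoc F y) =
      prMu P μ F * (P (F (Fin.last t)).1 (F (Fin.last t)).2 y.1 * μ y.1 y.2) := by
  unfold prMu
  rw [Fin.prod_univ_castSucc]
  congr 1
  · apply Finset.prod_congr rfl
    intro k _
    have h1 : (Fin.snoc F y : Fin (t+2) → S × A) k.castSucc.castSucc = F k.castSucc :=
      Fin.snoc_castSucc ..
    have h2 : (Fin.snoc F y : Fin (t+2) → S × A) k.castSucc.succ = F k.succ := by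
      rw [Fin.succ_castSucc]; exact Fin.snoc_castSucc ..
    rw [h1, h2]
  · have h1 : (Fin.snoc F y : Fin (t+2) → S × A) (Fin.last t).castSucc = F (Fin.last t) :=
      Fin.snoc_castSucc ..
    have h2 : (Fin.snoc F y : Fin (t+2) → S × A) (Fin.last t).succ = y := by
      rw [Fin.succ_last]; exact Fin.snoc_last ..
    rw [h1, h2]

lemma Bmat_succ_le (hP : IsTransition P) (hπ : IsPolicy π) (hμ : IsBehavior μ)
    (hβ : IsTrace β) (hc : Cond1 π μ β) (t : ℕ) (x y : S × A) :
    Bmat P μ β (t + 1) x y ≤ (Bmat P μ β t * polMat P π) x y := by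
  have hR : (Bmat P μ β t * polMat P π) x y
      = ∑ F : Fin (t + 1) → S × A,
        if F 0 = x then prMu P μ F * β t F * polMat P π (F (Fin.last t)) y else 0 := by
    rw [Matrix.mul_apply]
    unfold Bmat
    simp only [Finset.sum_mul]
    rw [Finset.sum_comm]
    apply Finset.sum_congr rfl
    intro F _
    have h1 : ∀ j : S × A,
        (if F 0 = x ∧ F (Fin.last t) = j then prMu P μ F * β t F else 0) * polMat P π j y
        = if F (Fin.last t) = j then
            (if F 0 = x then prMu P μ F * β t F * polMat P π j y else 0) else 0 := by
      intro j
      by_cases h1 : F 0 = x <;> by_cases h2 : F (Fin.last t) = j <;> simp [h1, h2]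
    simp only [h1]
    rw [Finset.sum_ite_eq]
    simp
  have hL : Bmat P μ β (t + 1) x y
      = ∑ F : Fin (t + 1) → S × A,
        if F 0 = x then prMu P μ (Fin.snoc F y) * β (t+1) (Fin.snoc F y) else 0 := by
    unfold Bmat
    rw [← Equiv.sum_comp (Fin.snocEquiv (fun _ => S × A))
      (fun G => if G 0 = x ∧ G (Fin.last (t+1)) = y then prMu P μ G * β (t+1) G else 0)]
    rw [Fintype.sum_prod_type]
    have hsnoceq : ∀ (z : S × A) (F : Fin (t+1) → S × A),
        Fin.snocEquiv (fun _ => S × A) (z, F) = Fin.snoc F z := fun z F => rfl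
    have h0 : ∀ (z : S × A) (F : Fin (t+1) → S × A),
        (Fin.snoc F z : Fin (t+2) → S × A) 0 = F 0 := by
      intro z F
      have h : (0 : Fin (t+2)) = Fin.castSucc 0 := rfl
      rw [h, Fin.snoc_castSucc]
    simp only [hsnoceq, h0, Fin.snoc_last]
    rw [Finset.sum_comm]
    apply Finset.sum_congr rfl
    intro F _
    by_cases h : F 0 = x
    · simp [h, Finset.sum_ite_eq']
    · simp [h]
  rw [hL, hR]
  apply Finset.sum_le_sum
  intro F _
  by_cases h : F 0 = x
  · rw [if_pos h, if_pos h]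
    have hm : (0:ℝ) < μ y.1 y.2 := hμ.2 _ _
    have hpre : (fun k => (Fin.snoc F y : Fin (t+2) → S × A) k.castSucc) = F := by
      funext k; exact Fin.snoc_castSucc ..
    have hlast : (Fin.snoc F y : Fin (t+2) → S × A) (Fin.last (t+1)) = y := Fin.snoc_last ..
    have hcond := hc t (Fin.snoc F y)
    rw [hpre, hlast] at hcond
    rw [prMu_snoc]
    calc prMu P μ F * (P (F (Fin.last t)).1 (F (Fin.last t)).2 y.1 * μ y.1 y.2)
          * β (t+1) (Fin.snoc F y)
        ≤ prMu P μ F * (P (F (Fin.last t)).1 (F (Fin.last t)).2 y.1 * μ y.1 y.2)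
          * (β t F * isRatio π μ y) := by
          apply mul_le_mul_of_nonneg_left hcond
          exact mul_nonneg (prMu_nonneg hP hμ F) (mul_nonneg (hP.1 _ _ _) hm.le)
      _ = prMu P μ F * β t F * polMat P π (F (Fin.last t)) y := by
          unfold isRatio polMat
          field_simp
  · rw [if_neg h, if_neg h]

lemma polMat_rowsum (hP : IsTransition P) (hπ : IsPolicy π) (z : S × A) :
    ∑ y : S × A, polMat P π z y = 1 := by
  unfold polMat
  rw [Fintype.sum_prod_type]
  simp only [← Finset.mul_sum]
  simp [hπ.2, hP.2]

lemma Bmat_rowsum_succ_le (hP : IsTransition P) (hπ : IsPolicy π) (hμ : IsBehavior μ)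
    (hβ : IsTrace β) (hc : Cond1 π μ β) (t : ℕ) (x : S × A) :
    ∑ y : S × A, Bmat P μ β (t + 1) x y ≤ ∑ y : S × A, Bmat P μ β t x y := by
  calc ∑ y : S × A, Bmat P μ β (t + 1) x y
      ≤ ∑ y : S × A, (Bmat P μ β t * polMat P π) x y :=
        Finset.sum_le_sum fun y _ => Bmat_succ_le hP hπ hμ hβ hc t x y
    _ = ∑ y : S × A, Bmat P μ β t x y := by
        simp only [Matrix.mul_apply]
        rw [Finset.sum_comm]
        apply Finset.sum_congr rfl
        intro z _
        rw [← Finset.mul_sum, polMat_rowsum hP hπ, mul_one]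

lemma Bmat_rowsum_le_one (hP : IsTransition P) (hπ : IsPolicy π) (hμ : IsBehavior μ)
    (hβ : IsTrace β) (hc : Cond1 π μ β) (t : ℕ) (x : S × A) :
    ∑ y : S × A, Bmat P μ β t x y ≤ 1 := by
  induction t with
  | zero => simp [Bmat_zero hβ]
  | succ t ih => exact le_trans (Bmat_rowsum_succ_le hP hπ hμ hβ hc t x) ih

lemma Bmat_rowsum_nonneg (hP : IsTransition P) (hμ : IsBehavior μ) (hβ : IsTrace β)
    (t : ℕ) (x : S × A) : 0 ≤ ∑ y : S × A, Bmat P μ β t x y :=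
  Finset.sum_nonneg fun y _ => Bmat_nonneg hP hμ hβ t x y

lemma mulVec_abs_le' {x : S × A} {M : Matrix (S × A) (S × A) ℝ} (hM : ∀ y, 0 ≤ M x y)
    (Δ : S × A → ℝ) : |M.mulVec Δ x| ≤ (∑ y : S × A, M x y) * ‖Δ‖ := by
  unfold Matrix.mulVec dotProduct
  calc |∑ y : S × A, M x y * Δ y| ≤ ∑ y : S × A, |M x y * Δ y| := Finset.abs_sum_le_sum_abs _ _
    _ ≤ ∑ y : S × A, M x y * ‖Δ‖ := by
        apply Finset.sum_le_sum
        intro y _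
        rw [abs_mul, abs_of_nonneg (hM y)]
        exact mul_le_mul_of_nonneg_left (by simpa using norm_le_pi_norm Δ y) (hM y)
    _ = (∑ y : S × A, M x y) * ‖Δ‖ := (Finset.sum_mul _ _ _).symm

-- generic bound: nonneg matrix with row sums ≤ 1
lemma mulVec_abs_le {x : S × A} {M : Matrix (S × A) (S × A) ℝ} (hM : ∀ y, 0 ≤ M x y)
    (hrs : ∑ y : S × A, M x y ≤ 1) (Δ : S × A → ℝ) :
    |M.mulVec Δ x| ≤ ‖Δ‖ := by
  calc |M.mulVec Δ x| ≤ (∑ y : S × A, M x y) * ‖Δ‖ := mulVec_abs_le' hM Δ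
    _ ≤ 1 * ‖Δ‖ := mul_le_mul_of_nonneg_right hrs (norm_nonneg _)
    _ = ‖Δ‖ := one_mul _

lemma BP_rowsum (hP : IsTransition P) (hπ : IsPolicy π) (t : ℕ) (x : S × A) :
    ∑ y : S × A, (Bmat P μ β t * polMat P π) x y = ∑ y : S × A, Bmat P μ β t x y := by
  simp only [Matrix.mul_apply]
  rw [Finset.sum_comm]
  apply Finset.sum_congr rfl
  intro z _
  rw [← Finset.mul_sum, polMat_rowsum hP hπ, mul_one]

lemma BP_nonneg (hP : IsTransition P) (hπ : IsPolicy π) (hμ : IsBehavior μ) (hβ : IsTrace β)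
    (t : ℕ) (x y : S × A) : 0 ≤ (Bmat P μ β t * polMat P π) x y := by
  rw [Matrix.mul_apply]
  exact Finset.sum_nonneg fun z _ =>
    mul_nonneg (Bmat_nonneg hP hμ hβ t x z) (mul_nonneg (hP.1 _ _ _) (hπ.1 _ _))

lemma contraction_core {R : S × A → ℝ} {γ : ℝ}
    (hP : IsTransition P) (hπ : IsPolicy π) (hμ : IsBehavior μ) (hβ : IsTrace β)
    (hγ0 : 0 ≤ γ) (hγ1 : γ < 1) (hc : Cond1 π μ β)
    (Qpi : S × A → ℝ) (hQpi : Tpi P R π γ Qpi = Qpi) (Q : S × A → ℝ) :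
    ‖Mop P R π μ β γ Q - Qpi‖ ≤ γ * ‖Q - Qpi‖ := by
  set Δ : S × A → ℝ := Q - Qpi with hΔ
  -- row sums
  set rs : ℕ → (S × A) → ℝ := fun t x => ∑ y : S × A, Bmat P μ β t x y with hrs
  have hrs_nonneg : ∀ t x, 0 ≤ rs t x := fun t x => Bmat_rowsum_nonneg hP hμ hβ t x
  have hrs_le_one : ∀ t x, rs t x ≤ 1 := fun t x => Bmat_rowsum_le_one hP hπ hμ hβ hc t x
  have hrs_mono : ∀ t x, rs (t+1) x ≤ rs t x := fun t x => Bmat_rowsum_succ_le hP hπ hμ hβ hc t x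
  have hrs_zero : ∀ x, rs 0 x = 1 := by
    intro x
    simp [hrs, Bmat_zero hβ]
  -- Bellman difference
  have hv : (fun y => Tpi P R π γ Q y - Q y)
      = fun y => γ * (polMat P π).mulVec Δ y - Δ y := by
    funext y
    have h1 : Tpi P R π γ Qpi y = Qpi y := congrFun hQpi y
    unfold Tpi at h1 ⊢
    have h2 : (polMat P π).mulVec Δ y
        = (polMat P π).mulVec Q y - (polMat P π).mulVec Qpi y := by
      rw [hΔ, Matrix.mulVec_sub]; rfl
    rw [h2]
    simp only [hΔ, Pi.sub_apply]
    linarith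
  -- reduce to per-coordinate bound
  rw [pi_norm_le_iff_of_nonneg (mul_nonneg hγ0 (norm_nonneg _))]
  intro x
  have hgeo : Summable (fun t : ℕ => γ ^ t * ‖Δ‖) :=
    (summable_geometric_of_lt_one hγ0 hγ1).mul_right _
  set c : ℕ → ℝ := fun t => γ ^ t * (Bmat P μ β t).mulVec Δ x with hcdef
  set a : ℕ → ℝ := fun t => γ ^ (t+1) * ((Bmat P μ β t * polMat P π).mulVec Δ) x with hadef
  set d : ℕ → ℝ := fun t => a t - c (t+1) with hddef
  have hγt : ∀ t : ℕ, (0:ℝ) ≤ γ ^ t := fun t => pow_nonneg hγ0 t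
  have hcb : ∀ t, |c t| ≤ γ ^ t * ‖Δ‖ := by
    intro t
    rw [abs_mul, abs_of_nonneg (hγt t)]
    exact mul_le_mul_of_nonneg_left
      (mulVec_abs_le (fun y => Bmat_nonneg hP hμ hβ t x y) (hrs_le_one t x) Δ) (hγt t)
  have hab : ∀ t, |a t| ≤ γ ^ t * ‖Δ‖ := by
    intro t
    rw [abs_mul, abs_of_nonneg (hγt (t+1))]
    calc γ ^ (t+1) * |(Bmat P μ β t * polMat P π).mulVec Δ x|
        ≤ γ ^ (t+1) * ‖Δ‖ := mul_le_mul_of_nonneg_left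
          (mulVec_abs_le (fun y => BP_nonneg hP hπ hμ hβ t x y)
            (le_trans (le_of_eq (BP_rowsum hP hπ t x)) (hrs_le_one t x)) Δ) (hγt (t+1))
      _ ≤ γ ^ t * ‖Δ‖ := by
          apply mul_le_mul_of_nonneg_right _ (norm_nonneg _)
          exact pow_le_pow_of_le_one hγ0 hγ1.le (Nat.le_succ t)
  have hsc : Summable c := Summable.of_norm_bounded hgeo (fun t => by
    rw [Real.norm_eq_abs]; exact hcb t)
  have hsa : Summable a := Summable.of_norm_bounded hgeo (fun t => by
    rw [Real.norm_eq_abs]; exact hab t)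
  have hscs : Summable (fun t => c (t+1)) := (summable_nat_add_iff 1).mpr hsc
  have hsd : Summable d := hsa.sub hscs
  have hc0 : c 0 = Δ x := by
    have hB0 : (Bmat P μ β 0).mulVec Δ x = Δ x := by
      simp [Matrix.mulVec, dotProduct, Bmat_zero hβ, ite_mul]
    simp only [hcdef, pow_zero, one_mul, hB0]
  have hterm : ∀ t : ℕ,
      γ ^ t * (Bmat P μ β t).mulVec (fun y => Tpi P R π γ Q y - Q y) x = a t - c t := by
    intro t
    rw [hv]
    have h1 : (fun y => γ * (polMat P π).mulVec Δ y - Δ y)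
        = (γ • ((polMat P π).mulVec Δ) - Δ) := by
      funext y; simp
    rw [h1, Matrix.mulVec_sub, Matrix.mulVec_smul, Matrix.mulVec_mulVec]
    simp only [hadef, hcdef, Pi.sub_apply, Pi.smul_apply, smul_eq_mul]
    ring
  have hMop : Mop P R π μ β γ Q x - Qpi x = ∑' t, d t := by
    have h2 : ∑' t, c t = c 0 + ∑' t, c (t+1) := Summable.tsum_eq_zero_add hsc
    have h3 : ∑' t, d t = ∑' t, a t - ∑' t, c (t+1) := Summable.tsum_sub hsa hscs
    have h4 : (∑' t, (γ ^ t * (Bmat P μ β t).mulVec (fun y => Tpi P R π γ Q y - Q y) x))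
        = ∑' t, (a t - c t) := tsum_congr hterm
    have h5 : ∑' t, (a t - c t) = ∑' t, a t - ∑' t, c t := Summable.tsum_sub hsa hsc
    unfold Mop
    rw [h4, h5]
    have h6 : Q x - Qpi x = Δ x := rfl
    rw [hc0] at h2
    linarith [h2, h3]
  -- bound each d t
  set g : ℕ → ℝ := fun t => γ ^ (t+1) * (rs t x - rs (t+1) x) * ‖Δ‖ with hgdef
  have hrsd : ∀ t, 0 ≤ rs t x - rs (t+1) x := fun t => sub_nonneg.mpr (hrs_mono t x)
  have hgnn : ∀ t, 0 ≤ g t := fun t =>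
    mul_nonneg (mul_nonneg (hγt (t+1)) (hrsd t)) (norm_nonneg _)
  have hdb : ∀ t, |d t| ≤ g t := by
    intro t
    have hE : ∀ y, 0 ≤ (Bmat P μ β t * polMat P π - Bmat P μ β (t+1)) x y := by
      intro y
      simp only [Matrix.sub_apply]
      exact sub_nonneg.mpr (Bmat_succ_le hP hπ hμ hβ hc t x y)
    have hd2 : d t = γ ^ (t+1) * (Bmat P μ β t * polMat P π - Bmat P μ β (t+1)).mulVec Δ x := by
      simp only [hddef, hadef, hcdef, Matrix.sub_mulVec, Pi.sub_apply, pow_succ]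
      ring
    rw [hd2, abs_mul, abs_of_nonneg (hγt (t+1))]
    have hrsE : ∑ y : S × A, (Bmat P μ β t * polMat P π - Bmat P μ β (t+1)) x y
        = rs t x - rs (t+1) x := by
      simp only [Matrix.sub_apply, Finset.sum_sub_distrib]
      rw [BP_rowsum hP hπ t x]
    calc γ ^ (t+1) * |(Bmat P μ β t * polMat P π - Bmat P μ β (t+1)).mulVec Δ x|
        ≤ γ ^ (t+1) * ((rs t x - rs (t+1) x) * ‖Δ‖) := by
          apply mul_le_mul_of_nonneg_left _ (hγt (t+1))
          rw [← hrsE]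
          exact mulVec_abs_le' hE Δ
      _ = g t := by rw [hgdef]; ring
  have hsg : Summable g := Summable.of_norm_bounded hgeo (fun t => by
    rw [Real.norm_eq_abs, abs_of_nonneg (hgnn t)]
    calc g t ≤ γ ^ (t+1) * 1 * ‖Δ‖ := by
          apply mul_le_mul_of_nonneg_right _ (norm_nonneg _)
          apply mul_le_mul_of_nonneg_left _ (hγt (t+1))
          linarith [hrs_le_one t x, hrs_nonneg (t+1) x]
      _ ≤ γ ^ t * ‖Δ‖ := by
          rw [mul_one]
          exact mul_le_mul_of_nonneg_right
            (pow_le_pow_of_le_one hγ0 hγ1.le (Nat.le_succ t)) (norm_nonneg _))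
  have hsdn : Summable (fun t => ‖d t‖) := by
    apply Summable.of_nonneg_of_le (fun t => norm_nonneg _) (fun t => ?_) hsg
    rw [Real.norm_eq_abs]; exact hdb t
  -- partial sums of the telescoping bound
  have hpartial : ∀ n : ℕ,
      (∑ i ∈ Finset.range n, γ ^ (i+1) * (rs i x - rs (i+1) x)) + γ ^ (n+1) * rs n x
        ≤ γ * rs 0 x := by
    intro n
    induction n with
    | zero => simp [pow_one]
    | succ n ih =>
      rw [Finset.sum_range_succ]
      have h1 : γ ^ (n+2) * rs (n+1) x ≤ γ ^ (n+1) * rs (n+1) x :=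
        mul_le_mul_of_nonneg_right
          (pow_le_pow_of_le_one hγ0 hγ1.le (Nat.le_succ (n+1))) (hrs_nonneg (n+1) x)
      nlinarith [hrs_nonneg (n+1) x, hγt (n+1)]
  have htel : ∑' t, γ ^ (t+1) * (rs t x - rs (t+1) x) ≤ γ := by
    apply Real.tsum_le_of_sum_range_le (fun t => mul_nonneg (hγt (t+1)) (hrsd t))
    intro n
    have := hpartial n
    rw [hrs_zero x] at this
    nlinarith [mul_nonneg (hγt (n+1)) (hrs_nonneg n x)]
  -- conclude
  have hfinal : |Mop P R π μ β γ Q x - Qpi x| ≤ γ * ‖Δ‖ := by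
    rw [hMop]
    calc |∑' t, d t| ≤ ∑' t, ‖d t‖ := by
          simpa using norm_tsum_le_tsum_norm hsdn
      _ ≤ ∑' t, g t := Summable.tsum_le_tsum (fun t => by rw [Real.norm_eq_abs]; exact hdb t) hsdn hsg
      _ = (∑' t, γ ^ (t+1) * (rs t x - rs (t+1) x)) * ‖Δ‖ := tsum_mul_right
      _ ≤ γ * ‖Δ‖ := mul_le_mul_of_nonneg_right htel (norm_nonneg _)
  simpa [Real.norm_eq_abs, Pi.sub_apply] using hfinal

end Aux

theorem stmt2' {S A : Type} [Fintype S] [Fintype A] [DecidableEq S] [DecidableEq A]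
    [Nonempty S] [Nonempty A]
    (P : S → A → S → ℝ) (R : S × A → ℝ) (π μ : S → A → ℝ) (γ : ℝ)
    (β : (t : ℕ) → (Fin (t + 1) → S × A) → ℝ)
    (hP : IsTransition P) (hπ : IsPolicy π) (hμ : IsBehavior μ) (hβ : IsTrace β)
    (hγ0 : 0 ≤ γ) (hγ1 : γ < 1)
    (hc : Cond1 π μ β)
    (Qpi : S × A → ℝ) (hQpi : Tpi P R π γ Qpi = Qpi) :
    (∀ Q : S × A → ℝ, ‖Mop P R π μ β γ Q - Qpi‖ ≤ γ * ‖Q - Qpi‖) ∧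
    Mop P R π μ β γ Qpi = Qpi ∧
    (∀ Q : S × A → ℝ, Mop P R π μ β γ Q = Q → Q = Qpi) ∧
    ∀ Q : S × A → ℝ,
      Filter.Tendsto (fun i => (Mop P R π μ β γ)^[i] Q) Filter.atTop (nhds Qpi) := by
  have hcontr : ∀ Q : S × A → ℝ, ‖Mop P R π μ β γ Q - Qpi‖ ≤ γ * ‖Q - Qpi‖ :=
    fun Q => contraction_core hP hπ hμ hβ hγ0 hγ1 hc Qpi hQpi Q
  have hfix : Mop P R π μ β γ Qpi = Qpi := by
    have h := hcontr Qpi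
    simp only [sub_self, norm_zero, mul_zero] at h
    have := norm_le_zero_iff.mp h
    rwa [sub_eq_zero] at this
  refine ⟨hcontr, hfix, ?_, ?_⟩
  · intro Q hQ
    have h := hcontr Q
    rw [hQ] at h
    have h0 : ‖Q - Qpi‖ ≤ 0 := by nlinarith [norm_nonneg (Q - Qpi)]
    have := norm_le_zero_iff.mp h0
    rwa [sub_eq_zero] at this
  · intro Q
    have hiter : ∀ i : ℕ, ‖(Mop P R π μ β γ)^[i] Q - Qpi‖ ≤ γ ^ i * ‖Q - Qpi‖ := by
      intro i
      induction i with
      | zero => simp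
      | succ i ih =>
        rw [Function.iterate_succ_apply']
        calc ‖Mop P R π μ β γ ((Mop P R π μ β γ)^[i] Q) - Qpi‖
            ≤ γ * ‖(Mop P R π μ β γ)^[i] Q - Qpi‖ := hcontr _
          _ ≤ γ * (γ ^ i * ‖Q - Qpi‖) := mul_le_mul_of_nonneg_left ih hγ0
          _ = γ ^ (i+1) * ‖Q - Qpi‖ := by ring
    rw [tendsto_iff_norm_sub_tendsto_zero]
    apply squeeze_zero (fun i => norm_nonneg _) hiter
    have := (tendsto_pow_atTop_nhds_zero_of_lt_one hγ0 hγ1).mul_const ‖Q - Qpi‖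
    simpa using this

/-- under Condition 1 and `γ ∈ [0,1)`, `M` is a `γ`-contraction in the sup norm,
`Q^π` is its unique fixed point, and `M^i Q → Q^π` for every `Q`. -/
theorem stmt2 {S A : Type} [Fintype S] [Fintype A] [DecidableEq S] [DecidableEq A]
    [Nonempty S] [Nonempty A]
    (P : S → A → S → ℝ) (R : S × A → ℝ) (π μ : S → A → ℝ) (γ : ℝ)
    (β : (t : ℕ) → (Fin (t + 1) → S × A) → ℝ)
    (hP : IsTransition P) (hπ : IsPolicy π) (hμ : IsBehavior μ) (hβ : IsTrace β)
    (hγ0 : 0 ≤ γ) (hγ1 : γ < 1)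
    (hc : Cond1 π μ β)
    (Qpi : S × A → ℝ) (hQpi : Tpi P R π γ Qpi = Qpi) :
    (∀ Q : S × A → ℝ, ‖Mop P R π μ β γ Q - Qpi‖ ≤ γ * ‖Q - Qpi‖) ∧
    Mop P R π μ β γ Qpi = Qpi ∧
    (∀ Q : S × A → ℝ, Mop P R π μ β γ Q = Q → Q = Qpi) ∧
    ∀ Q : S × A → ℝ,
      Filter.Tendsto (fun i => (Mop P R π μ β γ)^[i] Q) Filter.atTop (nhds Qpi) := by
  exact stmt2' P R π μ γ β hP hπ hμ hβ hγ0 hγ1 hc Qpi hQpi
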